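/- With the setup of the transfer-distance d(f,f') between maximal flows: for a maximal flow f, the residual graph G_f (with arc weights −1 on residual arcs corresponding to arcs of X where f and f' differ, +1 on residual arcs corresponding to arcs of X where they agree, 0 otherwise) contains a directed simple cycle of strictly negative total weight if and only if there exists a maximal flow f* in G with d(f*, f') < d(f, f'). -/

import Mathlib

open Finset

set_option linter.unusedSectionVars false
set_option maxHeartbeats 1000000

variable {V : Type*} [Fintype V] [DecidableEq V]

/-- An integral (nonnegative) flow with source `s`, sink `t`, capacities `c`. -/
def IsZFlow (c : V → V → ℤ) (s t : V) (f : V → V → ℤ) : Prop :=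
  (∀ u v, 0 ≤ f u v) ∧ (∀ u v, f u v ≤ c u v) ∧
    ∀ v, v ≠ s → v ≠ t → ∑ u, f v u = ∑ u, f u v

/-- The value of a flow: net flow out of the source. -/
def zvalue (f : V → V → ℤ) (s : V) : ℤ := ∑ u, f s u - ∑ u, f u s

/-- A maximal flow. -/
def IsZMaxFlow (c : V → V → ℤ) (s t : V) (f : V → V → ℤ) : Prop :=
  IsZFlow c s t f ∧ ∀ g, IsZFlow c s t g → zvalue g s ≤ zvalue f s

/-- Push one unit of flow along one residual step `(a, b, dir)`:
a residual arc from `a` to `b`; if `dir = true` it is a forward copy of the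
arc `(a,b)` (flow increases by 1), otherwise it is the backward copy of the
arc `(b,a)` (flow decreases by 1). -/
def push1 (f : V → V → ℤ) (e : V × V × Bool) : V → V → ℤ :=
  fun u v =>
    if e.2.2 then (if u = e.1 ∧ v = e.2.1 then f u v + 1 else f u v)
    else (if u = e.2.1 ∧ v = e.1 then f u v - 1 else f u v)

/-- Push one unit of flow along a residual cycle. -/
def push (f : V → V → ℤ) (g : List (V × V × Bool)) : V → V → ℤ :=
  g.foldl push1 f

/-- `g` is a simple cycle in the residual graph `G_f`: a nonempty list of
residual steps, with pairwise distinct start vertices, cyclically chained,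
where forward steps use unsaturated arcs and backward steps use arcs
carrying positive flow. -/
def ResidualCycle (c f : V → V → ℤ) (g : List (V × V × Bool)) : Prop :=
  g ≠ [] ∧ (g.map fun e => e.1).Nodup ∧
    (∀ i : Fin g.length,
      (g.get i).2.1 = (g.get ⟨((i : ℕ) + 1) % g.length, Nat.mod_lt _ i.pos⟩).1) ∧
    ∀ e ∈ g, if e.2.2 then f e.1 e.2.1 < c e.1 e.2.1 else 0 < f e.2.1 e.1

/-- The underlying arc of a residual step. -/
def arcOf (e : V × V × Bool) : V × V := if e.2.2 then (e.1, e.2.1) else (e.2.1, e.1)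

/-- The weight of a residual cycle relative to the reference flow `fp`:
`-1` on steps over arcs of `X` where `f` and `fp` differ, `+1` on steps over
arcs of `X` where they agree, `0` elsewhere. -/
def cycleWeight (X : Finset (V × V)) (f fp : V → V → ℤ) (g : List (V × V × Bool)) : ℤ :=
  (g.map fun e =>
    if arcOf e ∈ X then
      (if f (arcOf e).1 (arcOf e).2 ≠ fp (arcOf e).1 (arcOf e).2 then (-1 : ℤ) else 1)
    else 0).sum

/-- The transfer distance: number of arcs of `X` where the two flows differ. -/
def dist (X : Finset (V × V)) (f fp : V → V → ℤ) : ℕ :=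
  (X.filter fun e => f e.1 e.2 ≠ fp e.1 e.2).card

/-! ### Auxiliary machinery -/

def ind (u v : V) (e : V × V × Bool) : ℤ :=
  if e = (u, v, true) then 1 else if e = (v, u, false) then -1 else 0

def chg (g : List (V × V × Bool)) (u v : V) : ℤ :=
  (if (u, v, true) ∈ g then 1 else 0) - (if (v, u, false) ∈ g then 1 else 0)

lemma push1_eq (f : V → V → ℤ) (e : V × V × Bool) (u v : V) :
    push1 f e u v = f u v + ind u v e := by
  rcases e with ⟨a, b, (_|_)⟩
  · simp only [push1, ind, Prod.mk.injEq]
    norm_num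
    by_cases h : u = b ∧ v = a
    · obtain ⟨h1, h2⟩ := h; subst h1; subst h2; simp <;> omega
    · rw [if_neg h, if_neg (fun ⟨p, q⟩ => h ⟨q.symm, p.symm⟩)]; ring
  · simp only [push1, ind, Prod.mk.injEq]
    norm_num
    by_cases h : u = a ∧ v = b
    · obtain ⟨h1, h2⟩ := h; subst h1; subst h2; simp <;> omega
    · rw [if_neg h, if_neg (fun ⟨p, q⟩ => h ⟨p.symm, q.symm⟩)]; ring

lemma push_eq (f : V → V → ℤ) (g : List (V × V × Bool)) (u v : V) :
    push f g u v = f u v + (g.map (ind u v)).sum := by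
  induction g generalizing f with
  | nil => simp [push]
  | cons e tl ih =>
      have : push f (e :: tl) = push (push1 f e) tl := rfl
      rw [this, ih, push1_eq]
      simp [add_assoc]

lemma sum_ind (g : List (V × V × Bool)) (hg : g.Nodup) (u v : V) :
    (g.map (ind u v)).sum = chg g u v := by
  induction g with
  | nil => simp [chg]
  | cons e tl ih =>
      rw [List.nodup_cons] at hg
      simp only [List.map_cons, List.sum_cons, ih hg.2, chg, ind, List.mem_cons]
      have hmem := hg.1
      split_ifs <;> simp_all <;> omega

lemma push_eq' (f : V → V → ℤ) (g : List (V × V × Bool)) (hg : g.Nodup) (u v : V) :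
    push f g u v = f u v + chg g u v := by
  rw [push_eq, sum_ind g hg]

lemma map_sum_sub {α : Type*} (l : List α) (f g : α → ℤ) :
    (l.map f).sum - (l.map g).sum = (l.map fun a => f a - g a).sum := by
  induction l with
  | nil => simp
  | cons e tl ih => simp only [List.map_cons, List.sum_cons, ← ih]; ring

lemma swap_sum {α β : Type*} (l : List α) (s : Finset β) (φ : β → α → ℤ) :
    ∑ b ∈ s, (l.map (φ b)).sum = (l.map fun a => ∑ b ∈ s, φ b a).sum := by
  induction l with
  | nil => simp
  | cons e tl ih => simp [Finset.sum_add_distrib, ih]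

lemma sum_boole_count (l : List V) (v : V) :
    (l.map fun x => if x = v then (1 : ℤ) else 0).sum = l.count v := by
  induction l with
  | nil => simp
  | cons e tl ih =>
      by_cases h : e = v <;> simp [List.count_cons, h, ih] <;> push_cast <;> ring

lemma ind_sum_true (a b v : V) :
    ∑ u, ind v u ((a, b, true) : V × V × Bool) = if a = v then (1:ℤ) else 0 := by
  simp only [ind, Prod.mk.injEq, and_true, and_false, if_false]
  by_cases h : a = v
  · subst h; simp
  · simp [h]

lemma ind_sum_true' (a b v : V) :
    ∑ u, ind u v ((a, b, true) : V × V × Bool) = if b = v then (1:ℤ) else 0 := by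
  simp only [ind, Prod.mk.injEq, and_true, and_false, if_false]
  by_cases h : b = v
  · subst h; simp
  · simp [h]

lemma ind_sum_false (a b v : V) :
    ∑ u, ind v u ((a, b, false) : V × V × Bool) = if b = v then (-1:ℤ) else 0 := by
  simp only [ind, Prod.mk.injEq, and_false, if_false]
  by_cases h : b = v
  · subst h; simp
  · simp [h]

lemma ind_sum_false' (a b v : V) :
    ∑ u, ind u v ((a, b, false) : V × V × Bool) = if a = v then (-1:ℤ) else 0 := by
  simp only [ind, Prod.mk.injEq, and_false, if_false]
  by_cases h : a = v
  · subst h; simp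
  · simp [h]

lemma sum_ind_fst (g : List (V × V × Bool)) (v : V) :
    ∑ u, (g.map (ind v u)).sum - ∑ u, (g.map (ind u v)).sum
      = ((g.map fun e => e.1).count v : ℤ) - ((g.map fun e => e.2.1).count v : ℤ) := by
  rw [swap_sum, swap_sum, ← sum_boole_count, ← sum_boole_count, List.map_map, List.map_map,
    map_sum_sub, map_sum_sub]
  congr 1
  apply List.map_congr_left
  intro e _
  rcases e with ⟨a, b, (_|_)⟩
  · rw [ind_sum_false, ind_sum_false']
    simp only [Function.comp_apply]
    by_cases h1 : a = v <;> by_cases h2 : b = v <;> simp_all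
  · rw [ind_sum_true, ind_sum_true']
    simp

lemma ends_perm (g : List (V × V × Bool))
    (hchain : ∀ i : Fin g.length,
      (g.get i).2.1 = (g.get ⟨((i : ℕ) + 1) % g.length, Nat.mod_lt _ i.pos⟩).1) :
    (g.map fun e => e.2.1).Perm (g.map fun e => e.1) := by
  have key : (g.map fun e => e.2.1) = (g.map fun e => e.1).rotate 1 := by
    apply List.ext_getElem
    · simp
    · intro n h1 h2
      have hn : n < g.length := by simpa using h1
      rw [List.getElem_map, List.getElem_rotate, List.getElem_map]
      have := hchain ⟨n, hn⟩
      simp only [List.get_eq_getElem] at this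
      simp only [List.length_map]
      exact this
  rw [key]
  exact List.rotate_perm _ 1

lemma chg_balance (g : List (V × V × Bool))
    (hnd : (g.map fun e => e.1).Nodup)
    (hchain : ∀ i : Fin g.length,
      (g.get i).2.1 = (g.get ⟨((i : ℕ) + 1) % g.length, Nat.mod_lt _ i.pos⟩).1)
    (v : V) : ∑ u, chg g v u = ∑ u, chg g u v := by
  have hnd' : g.Nodup := hnd.of_map
  have h1 : ∑ u, chg g v u - ∑ u, chg g u v = 0 := by
    have e1 : ∀ u, chg g v u = (g.map (ind v u)).sum := fun u => (sum_ind g hnd' v u).symm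
    have e2 : ∀ u, chg g u v = (g.map (ind u v)).sum := fun u => (sum_ind g hnd' u v).symm
    simp only [e1, e2]
    rw [sum_ind_fst]
    rw [((ends_perm g hchain).count_eq v)]
    ring
  linarith

lemma chg_mem_bounds (g : List (V × V × Bool)) (u v : V) :
    chg g u v = (if (u, v, true) ∈ g then (1:ℤ) else 0) - (if (v, u, false) ∈ g then 1 else 0) :=
  rfl

lemma push_isZFlow {c f : V → V → ℤ} {s t : V} (hf : IsZFlow c s t f)
    {g : List (V × V × Bool)} (hg : ResidualCycle c f g) :
    IsZFlow c s t (push f g) := by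
  obtain ⟨hne, hnd, hchain, hres⟩ := hg
  have hnd' : g.Nodup := hnd.of_map
  obtain ⟨h0, hc, hcons⟩ := hf
  refine ⟨?_, ?_, ?_⟩
  · intro u v
    rw [push_eq' f g hnd', chg_mem_bounds]
    by_cases hB : ((v, u, false) : V × V × Bool) ∈ g
    · have := hres _ hB
      simp only [if_neg (by simp : ¬ (((v,u,false) : V × V × Bool)).2.2 = true)] at this
      have h1 : 0 < f u v := by simpa using this
      split_ifs <;> omega
    · have := h0 u v
      split_ifs <;> omega
  · intro u v
    rw [push_eq' f g hnd', chg_mem_bounds]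
    by_cases hF : ((u, v, true) : V × V × Bool) ∈ g
    · have := hres _ hF
      simp only [if_pos (by simp : (((u,v,true) : V × V × Bool)).2.2 = true)] at this
      have h1 : f u v < c u v := by simpa using this
      split_ifs <;> omega
    · have := hc u v
      split_ifs <;> omega
  · intro v hvs hvt
    have e1 : ∀ u, push f g v u = f v u + chg g v u := fun u => push_eq' f g hnd' v u
    have e2 : ∀ u, push f g u v = f u v + chg g u v := fun u => push_eq' f g hnd' u v
    simp only [e1, e2, Finset.sum_add_distrib]
    rw [hcons v hvs hvt, chg_balance g hnd hchain v]

lemma zvalue_push {c f : V → V → ℤ} {g : List (V × V × Bool)}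
    (hg : ResidualCycle c f g) (s : V) :
    zvalue (push f g) s = zvalue f s := by
  obtain ⟨hne, hnd, hchain, hres⟩ := hg
  have hnd' : g.Nodup := hnd.of_map
  have e1 : ∀ u, push f g s u = f s u + chg g s u := fun u => push_eq' f g hnd' s u
  have e2 : ∀ u, push f g u s = f u s + chg g u s := fun u => push_eq' f g hnd' u s
  simp only [zvalue, e1, e2, Finset.sum_add_distrib]
  rw [chg_balance g hnd hchain s]
  ring


def wA (f f' : V → V → ℤ) (a : V × V) : ℤ := if f a.1 a.2 ≠ f' a.1 a.2 then -1 else 1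
def eF (a : V × V) : V × V × Bool := (a.1, a.2, true)
def eB (a : V × V) : V × V × Bool := (a.2, a.1, false)
def usedC (g : List (V × V × Bool)) (a : V × V) : ℤ :=
  (if eF a ∈ g then 1 else 0) + (if eB a ∈ g then 1 else 0)

lemma arcOf_eq_iff (e : V × V × Bool) (a : V × V) :
    arcOf e = a ↔ e = eF a ∨ e = eB a := by
  rcases e with ⟨x, y, (_|_)⟩ <;> rcases a with ⟨a1, a2⟩ <;>
    simp [arcOf, eF, eB, Prod.ext_iff] <;> tauto

lemma eF_ne_eB (a b : V × V) : eF a ≠ eB b := by simp [eF, eB, Prod.ext_iff]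

lemma sum_boole_mem {α : Type*} [DecidableEq α] (l : List α) (hl : l.Nodup) (x : α) :
    (l.map fun a => if a = x then (1 : ℤ) else 0).sum = if x ∈ l then 1 else 0 := by
  induction l with
  | nil => simp
  | cons e tl ih =>
      rw [List.nodup_cons] at hl
      by_cases h : e = x
      · subst h
        simp [hl.1, ih hl.2]
      · simp [h, Ne.symm h, ih hl.2]

lemma map_sum_add {α : Type*} (l : List α) (f g : α → ℤ) :
    (l.map fun a => f a + g a).sum = (l.map f).sum + (l.map g).sum := by
  induction l with
  | nil => simp
  | cons e tl ih => simp only [List.map_cons, List.sum_cons, ih]; ring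

lemma map_sum_mul {α : Type*} (l : List α) (w : ℤ) (f : α → ℤ) :
    (l.map fun a => w * f a).sum = w * (l.map f).sum := by
  induction l with
  | nil => simp
  | cons e tl ih => simp only [List.map_cons, List.sum_cons, ih]; ring

lemma cycleWeight_eq (X : Finset (V × V)) (f f' : V → V → ℤ) (g : List (V × V × Bool))
    (hnd : g.Nodup) :
    cycleWeight X f f' g = ∑ a ∈ X, wA f f' a * usedC g a := by
  have step1 : cycleWeight X f f' g
      = (g.map fun e => ∑ a ∈ X, if arcOf e = a then wA f f' a else 0).sum := by
    unfold cycleWeight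
    congr 1
    apply List.map_congr_left
    intro e _
    rw [Finset.sum_ite_eq X (arcOf e) (fun a => wA f f' a)]
    rfl
  rw [step1, ← swap_sum]
  apply Finset.sum_congr rfl
  intro a _
  have hψ : ∀ e : V × V × Bool, (if arcOf e = a then wA f f' a else 0)
      = wA f f' a * ((if e = eF a then (1:ℤ) else 0) + (if e = eB a then 1 else 0)) := by
    intro e
    by_cases h : arcOf e = a
    · rcases (arcOf_eq_iff e a).1 h with h1 | h1 <;> subst h1
      · rw [if_pos h, if_pos rfl, if_neg (eF_ne_eB a a)]; ring
      · rw [if_pos h, if_pos rfl, if_neg (Ne.symm (eF_ne_eB a a))]; ring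
    · rw [if_neg h, if_neg, if_neg]
      · ring
      · intro he; exact h ((arcOf_eq_iff e a).2 (Or.inr he))
      · intro he; exact h ((arcOf_eq_iff e a).2 (Or.inl he))
  calc (g.map fun e => if arcOf e = a then wA f f' a else 0).sum
      = (g.map fun e => wA f f' a *
          ((if e = eF a then (1:ℤ) else 0) + (if e = eB a then 1 else 0))).sum := by
        congr 1; exact List.map_congr_left (fun e _ => hψ e)
    _ = wA f f' a * usedC g a := by
        rw [map_sum_mul, map_sum_add, sum_boole_mem g hnd, sum_boole_mem g hnd]
        unfold usedC
        split_ifs <;> rfl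

lemma dist_cast (X : Finset (V × V)) (h f' : V → V → ℤ) :
    (dist X h f' : ℤ) = ∑ a ∈ X, (if h a.1 a.2 ≠ f' a.1 a.2 then (1:ℤ) else 0) := by
  rw [show dist X h f' = (X.filter fun e => h e.1 e.2 ≠ f' e.1 e.2).card from rfl,
    Finset.card_filter]
  push_cast
  rfl

lemma not_both {c f : V → V → ℤ} {s t : V} {X : Finset (V × V)}
    (hf : IsZFlow c s t f) (hX : ∀ e ∈ X, c e.1 e.2 = 1)
    {g : List (V × V × Bool)} (hg : ResidualCycle c f g) {a : V × V} (ha : a ∈ X) :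
    ¬(eF a ∈ g ∧ eB a ∈ g) := by
  rintro ⟨h1, h2⟩
  have r1 := hg.2.2.2 _ h1
  have r2 := hg.2.2.2 _ h2
  simp only [eF, eB] at r1 r2
  norm_num at r1 r2
  have := hX a ha
  omega

lemma dist_push_eq {c f f' : V → V → ℤ} {s t : V} {X : Finset (V × V)}
    (hf : IsZFlow c s t f) (hf' : IsZFlow c s t f')
    (hX : ∀ e ∈ X, c e.1 e.2 = 1)
    {g : List (V × V × Bool)} (hg : ResidualCycle c f g) :
    (dist X (push f g) f' : ℤ) = (dist X f f' : ℤ) + cycleWeight X f f' g := by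
  have hnd' : g.Nodup := hg.2.1.of_map
  rw [dist_cast, dist_cast, cycleWeight_eq X f f' g hnd', ← Finset.sum_add_distrib]
  apply Finset.sum_congr rfl
  intro a ha
  have hca := hX a ha
  have hb1 := hf.1 a.1 a.2
  have hb2 := hf.2.1 a.1 a.2
  have hb3 := hf'.1 a.1 a.2
  have hb4 := hf'.2.1 a.1 a.2
  have hnb := not_both hf hX hg ha
  rw [push_eq' f g hnd' a.1 a.2, chg_mem_bounds]
  by_cases hFm : ((a.1, a.2, true) : V × V × Bool) ∈ g
  · have r1 := hg.2.2.2 _ hFm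
    norm_num at r1
    have hB : ¬ ((a.2, a.1, false) : V × V × Bool) ∈ g := fun h => hnb ⟨hFm, h⟩
    simp only [wA, usedC, if_pos (show eF a ∈ g from hFm), if_neg (show eB a ∉ g from hB)]
    split_ifs <;> omega
  · by_cases hBm : ((a.2, a.1, false) : V × V × Bool) ∈ g
    · have r2 := hg.2.2.2 _ hBm
      norm_num at r2
      simp only [wA, usedC, if_neg (show eF a ∉ g from hFm), if_pos (show eB a ∈ g from hBm)]
      split_ifs <;> omega
    · simp only [wA, usedC, if_neg (show eF a ∉ g from hFm), if_neg (show eB a ∉ g from hBm)]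
      split_ifs <;> omega


def RelH (h : V → V → ℤ) (x y : V) : Prop := 0 < h x y ∨ h y x < 0

lemma exists_next {h : V → V → ℤ} (hcirc : ∀ v, ∑ u, h v u = ∑ u, h u v)
    {x y : V} (hxy : RelH h x y) : ∃ z, RelH h y z := by
  by_contra hno
  push_neg at hno
  have hno' : ∀ z, h y z ≤ 0 ∧ 0 ≤ h z y := by
    intro z
    have := hno z
    rw [RelH] at this
    push_neg at this
    exact ⟨this.1, le_of_not_gt (by exact fun hl => absurd hl (by simpa using this.2))⟩
  have h1 : ∑ u, h y u ≤ 0 := Finset.sum_nonpos (fun u _ => (hno' u).1)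
  have h2 : 0 ≤ ∑ u, h u y := Finset.sum_nonneg (fun u _ => (hno' u).2)
  have h3 : ∑ u, h y u = 0 := le_antisymm h1 (hcirc y ▸ h2)
  have h4 : ∑ u, h u y = 0 := (hcirc y) ▸ h3
  have h5 : ∀ u, h y u = 0 := by
    intro u
    have := (Finset.sum_eq_zero_iff_of_nonpos (fun z _ => (hno' z).1)).1 h3 u (Finset.mem_univ u)
    exact this
  have h6 : ∀ u, h u y = 0 := by
    intro u
    exact (Finset.sum_eq_zero_iff_of_nonneg (fun z _ => (hno' z).2)).1 h4 u (Finset.mem_univ u)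
  rcases hxy with hp | hn
  · rw [h6 x] at hp; exact lt_irrefl 0 hp
  · rw [h5 x] at hn; exact lt_irrefl 0 hn

def stepOf (h : V → V → ℤ) (x y : V) : V × V × Bool :=
  if 0 < h x y then (x, y, true) else (x, y, false)

lemma stepOf_fst (h : V → V → ℤ) (x y : V) : (stepOf h x y).1 = x := by
  unfold stepOf; split_ifs <;> rfl

lemma stepOf_snd (h : V → V → ℤ) (x y : V) : (stepOf h x y).2.1 = y := by
  unfold stepOf; split_ifs <;> rfl

lemma exists_cycle {c f h : V → V → ℤ}
    (hcirc : ∀ v, ∑ u, h v u = ∑ u, h u v)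
    (hsc1 : ∀ u v, 0 < h u v → f u v < c u v)
    (hsc2 : ∀ u v, h u v < 0 → 0 < f u v)
    (hne : ∃ x y, h x y ≠ 0) :
    ∃ g : List (V × V × Bool), ResidualCycle c f g ∧
      (∀ e ∈ g, if e.2.2 then 0 < h e.1 e.2.1 else h e.2.1 e.1 < 0) := by
  classical
  -- a starting vertex with an incoming Rel-arc
  obtain ⟨x0, y0, hxy0⟩ := hne
  have hstart : ∃ a b : V, RelH h a b := by
    rcases lt_or_gt_of_ne hxy0 with hlt | hgt
    · exact ⟨y0, x0, Or.inr hlt⟩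
    · exact ⟨x0, y0, Or.inl hgt⟩
  obtain ⟨a0, b0, hab0⟩ := hstart
  set S := {v : V // ∃ w, RelH h w v} with hS
  have hstep : ∀ v : S, ∃ z : S, RelH h v.1 z.1 := by
    rintro ⟨v, w, hwv⟩
    obtain ⟨z, hz⟩ := exists_next hcirc hwv
    exact ⟨⟨z, v, hz⟩, hz⟩
  choose nxt hnxt using hstep
  set sq : ℕ → S := fun n => nxt^[n] ⟨b0, a0, hab0⟩ with hsq
  set vq : ℕ → V := fun n => (sq n).1 with hvq
  have hsucc : ∀ n, RelH h (vq n) (vq (n + 1)) := by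
    intro n
    have hit : sq (n + 1) = nxt (sq n) := Function.iterate_succ_apply' nxt n _
    show RelH h (sq n).1 (sq (n + 1)).1
    rw [hit]
    exact hnxt (sq n)
  -- pigeonhole
  have hpig : ∃ p q : ℕ, p < q ∧ vq p = vq q := by
    obtain ⟨i, j, hij, hveq⟩ := Fintype.exists_ne_map_eq_of_card_lt
      (fun n : Fin (Fintype.card V + 1) => vq n) (by simp)
    rcases lt_or_gt_of_ne (fun hc : (i : ℕ) = (j : ℕ) => hij (Fin.ext hc)) with hlt | hgt
    · exact ⟨i, j, hlt, hveq⟩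
    · exact ⟨j, i, hgt, hveq.symm⟩
  have hQ : ∃ q : ℕ, ∃ p, p < q ∧ vq p = vq q := by
    obtain ⟨p, q, h1, h2⟩ := hpig; exact ⟨q, p, h1, h2⟩
  set q0 := Nat.find hQ with hq0
  obtain ⟨p0, hp0lt, hp0eq⟩ := Nat.find_spec hQ
  have hinj : ∀ a b : ℕ, a < b → b < q0 → vq a ≠ vq b := by
    intro a b hab hbq hcon
    exact Nat.find_min hQ hbq ⟨a, hab, hcon⟩
  set m := q0 - p0 with hm
  have hmpos : 0 < m := by omega
  have hq0eq : p0 + m = q0 := by omega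
  refine ⟨(List.range m).map fun k => stepOf h (vq (p0 + k)) (vq (p0 + k + 1)), ?_, ?_⟩
  · refine ⟨?_, ?_, ?_, ?_⟩
    · simp only [ne_eq, List.map_eq_nil_iff, List.range_eq_nil]
      omega
    · rw [List.map_map]
      have : ((fun e : V × V × Bool => e.1) ∘ fun k => stepOf h (vq (p0 + k)) (vq (p0 + k + 1)))
          = fun k => vq (p0 + k) := by
        funext k; simp [stepOf_fst]
      rw [this]
      refine List.Nodup.map_on ?_ (List.nodup_range (n := m))
      intro x hx y hy hxy
      simp only [List.mem_range] at hx hy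
      by_contra hne'
      rcases Nat.lt_or_ge x y with hlt | hge
      · exact hinj (p0 + x) (p0 + y) (by omega) (by omega) hxy
      · have : y < x := by omega
        exact hinj (p0 + y) (p0 + x) (by omega) (by omega) hxy.symm
    · intro i
      have hlen : ((List.range m).map fun k =>
          stepOf h (vq (p0 + k)) (vq (p0 + k + 1))).length = m := by simp
      have hi : (i : ℕ) < m := by simpa using i.2
      simp only [List.get_eq_getElem, List.getElem_map, List.getElem_range,
        List.length_map, List.length_range, stepOf_fst, stepOf_snd]
      show vq (p0 + (i : ℕ) + 1) = vq (p0 + ((i : ℕ) + 1) % m)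
      rcases Nat.lt_or_ge ((i : ℕ) + 1) m with hlt | hge
      · rw [Nat.mod_eq_of_lt hlt]
        congr 1 <;> omega
      · have h1 : (i : ℕ) + 1 = m := by omega
        rw [h1, Nat.mod_self]
        have h2 : p0 + (i : ℕ) + 1 = q0 := by omega
        rw [h2]
        simpa using hp0eq.symm
    · intro e he
      simp only [List.mem_map, List.mem_range] at he
      obtain ⟨k, hk, hke⟩ := he
      have hrel := hsucc (p0 + k)
      subst hke
      unfold stepOf
      by_cases hpos : 0 < h (vq (p0 + k)) (vq (p0 + k + 1))
      · rw [if_pos hpos]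
        simpa using hsc1 _ _ hpos
      · rw [if_neg hpos]
        have hneg : h (vq (p0 + k + 1)) (vq (p0 + k)) < 0 := by
          rcases hrel with h1 | h1
          · exact absurd h1 hpos
          · exact h1
        simpa using hsc2 _ _ hneg
  · intro e he
    simp only [List.mem_map, List.mem_range] at he
    obtain ⟨k, hk, hke⟩ := he
    have hrel := hsucc (p0 + k)
    subst hke
    unfold stepOf
    by_cases hpos : 0 < h (vq (p0 + k)) (vq (p0 + k + 1))
    · rw [if_pos hpos]; simpa using hpos
    · rw [if_neg hpos]
      have hneg : h (vq (p0 + k + 1)) (vq (p0 + k)) < 0 := by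
        rcases hrel with h1 | h1
        · exact absurd h1 hpos
        · exact h1
      simpa using hneg


def Wgt (X : Finset (V × V)) (f f' h : V → V → ℤ) : ℤ :=
  ∑ a ∈ X, if h a.1 a.2 ≠ 0 then wA f f' a else 0

lemma key {c f f' : V → V → ℤ} {s t : V} {X : Finset (V × V)}
    (hX : ∀ e ∈ X, c e.1 e.2 = 1)
    (hf : IsZFlow c s t f) (hf' : IsZFlow c s t f') :
    ∀ N : ℕ, ∀ h : V → V → ℤ, (∑ p : V × V, (h p.1 p.2).natAbs) ≤ N →
    (∀ v, ∑ u, h v u = ∑ u, h u v) →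
    (∀ u v, -(f u v) ≤ h u v ∧ h u v ≤ c u v - f u v) →
    Wgt X f f' h < 0 →
    ∃ g, ResidualCycle c f g ∧ cycleWeight X f f' g < 0 := by
  intro N
  induction N with
  | zero =>
      intro h hm hcirc hfeas hwgt
      exfalso
      have hz : ∀ u v, h u v = 0 := by
        intro u v
        have h0 : ∑ p : V × V, (h p.1 p.2).natAbs = 0 := Nat.le_zero.1 hm
        have := (Finset.sum_eq_zero_iff).1 h0 (u, v) (Finset.mem_univ _)
        simpa [Int.natAbs_eq_zero] using this
      have : Wgt X f f' h = 0 := by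
        apply Finset.sum_eq_zero
        intro a _
        simp [hz a.1 a.2]
      omega
  | succ N ih =>
      intro h hm hcirc hfeas hwgt
      have hne : ∃ x y, h x y ≠ 0 := by
        by_contra hno
        push_neg at hno
        have : Wgt X f f' h = 0 := Finset.sum_eq_zero (fun a _ => by simp [hno a.1 a.2])
        omega
      have hsc1 : ∀ u v, 0 < h u v → f u v < c u v := by
        intro u v hh
        have := (hfeas u v).2
        omega
      have hsc2 : ∀ u v, h u v < 0 → 0 < f u v := by
        intro u v hh
        have := (hfeas u v).1
        omega
      obtain ⟨g, hgcyc, hgsteps⟩ := exists_cycle hcirc hsc1 hsc2 hne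
      by_cases hw : cycleWeight X f f' g < 0
      · exact ⟨g, hgcyc, hw⟩
      push_neg at hw
      have hnd' : g.Nodup := hgcyc.2.1.of_map
      have hF : ∀ u v, ((u, v, true) : V × V × Bool) ∈ g → 0 < h u v := by
        intro u v hmem
        have := hgsteps _ hmem
        simpa using this
      have hB : ∀ u v, ((v, u, false) : V × V × Bool) ∈ g → h u v < 0 := by
        intro u v hmem
        have := hgsteps _ hmem
        simpa using this
      set h1 : V → V → ℤ := fun u v => h u v - chg g u v with hh1
      have hkey : ∀ u v, (¬((u,v,true) : V × V × Bool) ∈ g ∧ ¬((v,u,false) : V × V × Bool) ∈ g ∧ h1 u v = h u v) ∨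
          (((u,v,true) : V × V × Bool) ∈ g ∧ 0 < h u v ∧ h1 u v = h u v - 1) ∨
          (((v,u,false) : V × V × Bool) ∈ g ∧ h u v < 0 ∧ h1 u v = h u v + 1) := by
        intro u v
        by_cases m1 : ((u,v,true) : V × V × Bool) ∈ g
        · have hp := hF u v m1
          have m2 : ¬((v,u,false) : V × V × Bool) ∈ g := by
            intro m2
            have := hB u v m2
            omega
          refine Or.inr (Or.inl ⟨m1, hp, ?_⟩)
          rw [hh1]
          simp only [chg_mem_bounds, if_pos m1, if_neg m2]
          ring
        · by_cases m2 : ((v,u,false) : V × V × Bool) ∈ g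
          · have hn := hB u v m2
            refine Or.inr (Or.inr ⟨m2, hn, ?_⟩)
            rw [hh1]
            simp only [chg_mem_bounds, if_neg m1, if_pos m2]
            ring
          · refine Or.inl ⟨m1, m2, ?_⟩
            rw [hh1]
            simp only [chg_mem_bounds, if_neg m1, if_neg m2]
            ring
      have hfeas1 : ∀ u v, -(f u v) ≤ h1 u v ∧ h1 u v ≤ c u v - f u v := by
        intro u v
        have hfe := hfeas u v
        have hf0 := hf.1 u v
        have hfc := hf.2.1 u v
        rcases hkey u v with ⟨_, _, he⟩ | ⟨_, hp, he⟩ | ⟨_, hn, he⟩ <;> rw [he] <;> omega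
      have hcirc1 : ∀ v, ∑ u, h1 v u = ∑ u, h1 u v := by
        intro v
        have e1 : ∀ u, h1 v u = h v u - chg g v u := fun u => rfl
        have e2 : ∀ u, h1 u v = h u v - chg g u v := fun u => rfl
        simp only [e1, e2, Finset.sum_sub_distrib]
        rw [hcirc v, chg_balance g hgcyc.2.1 hgcyc.2.2.1 v]
      have hmeas : ∑ p : V × V, (h1 p.1 p.2).natAbs ≤ N := by
        have hlt : ∑ p : V × V, (h1 p.1 p.2).natAbs < ∑ p : V × V, (h p.1 p.2).natAbs := by
          apply Finset.sum_lt_sum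
          · intro p _
            rcases hkey p.1 p.2 with ⟨_, _, he⟩ | ⟨_, hp, he⟩ | ⟨_, hn, he⟩ <;> rw [he] <;> omega
          · obtain ⟨e, he⟩ := List.exists_mem_of_ne_nil g hgcyc.1
            rcases e with ⟨x, y, (_|_)⟩
            · refine ⟨(y, x), Finset.mem_univ _, ?_⟩
              have hn := hB y x he
              show (h1 y x).natAbs < (h y x).natAbs
              rcases hkey y x with ⟨_, m2, _⟩ | ⟨_, hp, _⟩ | ⟨_, _, heq⟩
              · exact absurd he m2
              · omega
              · rw [heq]; omega
            · refine ⟨(x, y), Finset.mem_univ _, ?_⟩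
              have hp := hF x y he
              show (h1 x y).natAbs < (h x y).natAbs
              rcases hkey x y with ⟨m1, _, _⟩ | ⟨_, _, heq⟩ | ⟨_, hn, _⟩
              · exact absurd he m1
              · rw [heq]; omega
              · omega
        omega
      have hwgt1 : Wgt X f f' h1 < 0 := by
        have heq : Wgt X f f' h1 = Wgt X f f' h - cycleWeight X f f' g := by
          rw [Wgt, Wgt, cycleWeight_eq X f f' g hnd', ← Finset.sum_sub_distrib]
          apply Finset.sum_congr rfl
          intro a ha
          have hca := hX a ha
          have hf0 := hf.1 a.1 a.2
          have hfc := hf.2.1 a.1 a.2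
          have hfe := hfeas a.1 a.2
          rcases hkey a.1 a.2 with ⟨m1, m2, he⟩ | ⟨m1, hp, he⟩ | ⟨m2, hn, he⟩
          · have hu : usedC g a = 0 := by
              simp [usedC, eF, eB, m1, m2]
            rw [he, hu]
            ring
          · have m2 : ((a.2, a.1, false) : V × V × Bool) ∉ g := by
              intro m2'
              have := hB a.1 a.2 m2'
              omega
            have hu : usedC g a = 1 := by
              simp [usedC, eF, eB, m1, m2]
            have hval : h a.1 a.2 = 1 := by omega
            rw [he, hu, hval]
            norm_num
          · have m1 : ((a.1, a.2, true) : V × V × Bool) ∉ g := by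
              intro m1'
              have := hF a.1 a.2 m1'
              omega
            have hu : usedC g a = 1 := by
              simp [usedC, eF, eB, m1, m2]
            have hval : h a.1 a.2 = -1 := by omega
            rw [he, hu, hval]
            norm_num
        omega
      exact ih h1 hmeas hcirc1 hfeas1 hwgt1


/-- the residual graph of a maximal flow `f` contains a simple cycle of
negative weight iff there is a maximal flow `f*` with `d(f*, f') < d(f, f')`. -/
theorem stmt3 (s t : V) (c f f' : V → V → ℤ) (X : Finset (V × V))
    (hX : ∀ e ∈ X, c e.1 e.2 = 1)
    (hf : IsZMaxFlow c s t f) (hf' : IsZMaxFlow c s t f') :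
    (∃ g : List (V × V × Bool), ResidualCycle c f g ∧ cycleWeight X f f' g < 0) ↔
      ∃ fstar : V → V → ℤ, IsZMaxFlow c s t fstar ∧ dist X fstar f' < dist X f f' := by
  constructor
  · rintro ⟨g, hg, hw⟩
    refine ⟨push f g, ⟨push_isZFlow hf.1 hg, ?_⟩, ?_⟩
    · intro g' hg'
      rw [zvalue_push hg s]
      exact hf.2 g' hg'
    · have hid := dist_push_eq hf.1 hf'.1 hX hg
      have : (dist X (push f g) f' : ℤ) < (dist X f f' : ℤ) := by omega
      exact_mod_cast this
  · rintro ⟨fstar, hfs, hdist⟩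
    set h : V → V → ℤ := fun u v => fstar u v - f u v with hh
    have hex : ∀ w, w ≠ t → ∑ u, h w u = ∑ u, h u w := by
      intro w hwt
      by_cases hws : w = s
      · subst hws
        have hv1 : zvalue fstar w ≤ zvalue f w := hf.2 fstar hfs.1
        have hv2 : zvalue f w ≤ zvalue fstar w := hfs.2 f hf.1
        have hv : zvalue fstar w = zvalue f w := le_antisymm hv1 hv2
        rw [zvalue, zvalue] at hv
        have e1 : ∀ u, h w u = fstar w u - f w u := fun u => rfl
        have e2 : ∀ u, h u w = fstar u w - f u w := fun u => rfl
        simp only [e1, e2, Finset.sum_sub_distrib]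
        omega
      · have c1 := hf.1.2.2 w hws hwt
        have c2 := hfs.1.2.2 w hws hwt
        have e1 : ∀ u, h w u = fstar w u - f w u := fun u => rfl
        have e2 : ∀ u, h u w = fstar u w - f u w := fun u => rfl
        simp only [e1, e2, Finset.sum_sub_distrib]
        omega
    have hcirc : ∀ v, ∑ u, h v u = ∑ u, h u v := by
      intro v
      by_cases hvt : v = t
      · subst hvt
        have htotal : ∑ w, (∑ u, h w u - ∑ u, h u w) = 0 := by
          rw [Finset.sum_sub_distrib]
          rw [Finset.sum_comm]
          ring
        have hzero : ∀ w ∈ Finset.univ.erase v, (∑ u, h w u - ∑ u, h u w) = 0 := by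
          intro w hw
          have hwt : w ≠ v := (Finset.mem_erase.1 hw).1
          have := hex w hwt
          omega
        have := Finset.add_sum_erase Finset.univ
          (fun w => ∑ u, h w u - ∑ u, h u w) (Finset.mem_univ v)
        rw [Finset.sum_eq_zero hzero] at this
        rw [← this] at htotal
        have hfin : (∑ u, h v u - ∑ u, h u v) + 0 = 0 := htotal
        omega
      · exact hex v hvt
    have hfeas : ∀ u v, -(f u v) ≤ h u v ∧ h u v ≤ c u v - f u v := by
      intro u v
      have h1 := hfs.1.1 u v
      have h2 := hfs.1.2.1 u v
      have : h u v = fstar u v - f u v := rfl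
      omega
    have hwgt : Wgt X f f' h < 0 := by
      have heq : Wgt X f f' h = (dist X fstar f' : ℤ) - (dist X f f' : ℤ) := by
        rw [Wgt, dist_cast, dist_cast, ← Finset.sum_sub_distrib]
        apply Finset.sum_congr rfl
        intro a ha
        have hca := hX a ha
        have b1 := hf.1.1 a.1 a.2
        have b2 := hf.1.2.1 a.1 a.2
        have b3 := hfs.1.1 a.1 a.2
        have b4 := hfs.1.2.1 a.1 a.2
        have b5 := hf'.1.1 a.1 a.2
        have b6 := hf'.1.2.1 a.1 a.2
        have hhe : h a.1 a.2 = fstar a.1 a.2 - f a.1 a.2 := rfl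
        rw [wA, hhe]
        split_ifs <;> omega
      omega
    exact key hX hf.1 hf'.1 (∑ p : V × V, (h p.1 p.2).natAbs) h le_rfl hcirc hfeas hwgt
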